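/- Let A, B be n×n matrices over a field with A invertible, and let u, v, x, y be n-tuples of scalars with d(u), d(v), d(x), d(y) the corresponding diagonal matrices. Then the determinant of the 2n×2n block matrix [[A·d(u), B·d(x)], [A·d(v), B·d(y)]] equals det(A)² times the determinant of the n×n matrix whose (i,j) entry is (uᵢyⱼ − vᵢxⱼ)·(A⁻¹B)ᵢⱼ. -/

import Mathlib

open Matrix Polynomial

lemma map_block_det {R S : Type*} [CommRing R] [CommRing S] {n : Type*} [Fintype n]
    [DecidableEq n] (f : R →+* S) (M : Matrix n n R) (u v x y : n → R) :
    f ((fromBlocks (diagonal u) (M * diagonal x) (diagonal v) (M * diagonal y)).det)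
      = (fromBlocks (diagonal (f ∘ u)) (M.map f * diagonal (f ∘ x))
          (diagonal (f ∘ v)) (M.map f * diagonal (f ∘ y))).det := by
  rw [RingHom.map_det]
  congr 1
  simp [Matrix.fromBlocks_map, Matrix.map_mul, Matrix.diagonal_map f.map_zero, Function.comp_def]

lemma map_rhs_det {R S : Type*} [CommRing R] [CommRing S] {n : Type*} [Fintype n]
    [DecidableEq n] (f : R →+* S) (M : Matrix n n R) (u v x y : n → R) :
    f ((Matrix.of fun i j => (u i * y j - v i * x j) * M i j).det)
      = (Matrix.of fun i j => (f (u i) * f (y j) - f (v i) * f (x j)) * (M.map f) i j).det := by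
  rw [RingHom.map_det]
  congr 1
  ext i j
  simp [Matrix.map_apply]

lemma key_unit {K : Type*} [Field K] {n : Type*} [Fintype n] [DecidableEq n]
    (M : Matrix n n K) (u v x y : n → K) (hu : ∀ i, u i ≠ 0) :
    (fromBlocks (diagonal u) (M * diagonal x) (diagonal v) (M * diagonal y)).det
      = (Matrix.of fun i j => (u i * y j - v i * x j) * M i j).det := by
  have hdet : IsUnit (diagonal u).det := by
    rw [det_diagonal]
    exact (Finset.prod_ne_zero_iff.2 fun i _ => hu i).isUnit
  letI := (diagonal u).invertibleOfIsUnitDet hdet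
  rw [det_fromBlocks₁₁]
  have hinv : ⅟ (diagonal u) = diagonal fun i => (u i)⁻¹ := by
    apply invOf_eq_right_inv
    rw [diagonal_mul_diagonal]
    ext i j
    rcases eq_or_ne i j with h | h <;>
      simp [diagonal_apply, h, mul_inv_cancel₀ (hu j), Matrix.one_apply]
  have hmat : (Matrix.of fun i j => (u i * y j - v i * x j) * M i j)
      = diagonal u * (M * diagonal y - diagonal v * ⅟ (diagonal u) * (M * diagonal x)) := by
    ext i j
    rw [hinv]
    simp only [Matrix.of_apply, diagonal_mul, Matrix.sub_apply, mul_diagonal,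
      diagonal_mul_diagonal, Matrix.mul_apply, diagonal_apply]
    simp only [mul_ite, ite_mul, mul_zero, zero_mul, Finset.sum_ite_eq, Finset.sum_ite_eq',
      Finset.mem_univ, if_true]
    field_simp [hu i]
  rw [hmat, det_mul]

lemma key_general {K : Type*} [Field K] {n : Type*} [Fintype n] [DecidableEq n]
    (M : Matrix n n K) (u v x y : n → K) :
    (fromBlocks (diagonal u) (M * diagonal x) (diagonal v) (M * diagonal y)).det
      = (Matrix.of fun i j => (u i * y j - v i * x j) * M i j).det := by
  classical
  let f : K[X] →+* RatFunc K := algebraMap K[X] (RatFunc K)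
  let MP : Matrix n n K[X] := M.map Polynomial.C
  let uP : n → K[X] := fun i => Polynomial.C (u i) + Polynomial.X
  let vP : n → K[X] := fun i => Polynomial.C (v i)
  let xP : n → K[X] := fun i => Polynomial.C (x i)
  let yP : n → K[X] := fun i => Polynomial.C (y i)
  have huP : ∀ i, uP i ≠ 0 := by
    intro i h
    have : (uP i).coeff 1 = 1 := by simp [uP]
    rw [h] at this
    simp at this
  have hfu : ∀ i, f (uP i) ≠ 0 := fun i h => huP i <| by
    apply RatFunc.algebraMap_injective K
    rw [map_zero]
    exact h
  have hP : (fromBlocks (diagonal uP) (MP * diagonal xP) (diagonal vP) (MP * diagonal yP)).det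
      = (Matrix.of fun i j => (uP i * yP j - vP i * xP j) * MP i j).det := by
    apply RatFunc.algebraMap_injective K
    rw [show algebraMap K[X] (RatFunc K) = f from rfl, map_block_det f, map_rhs_det f]
    exact key_unit (MP.map f) (f ∘ uP) (f ∘ vP) (f ∘ xP) (f ∘ yP) hfu
  have hg := congrArg (Polynomial.evalRingHom (0 : K)) hP
  rw [map_block_det, map_rhs_det] at hg
  have hu' : (⇑(Polynomial.evalRingHom (0 : K)) ∘ uP) = u := by funext i; simp [uP]
  have hv' : (⇑(Polynomial.evalRingHom (0 : K)) ∘ vP) = v := by funext i; simp [vP]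
  have hx' : (⇑(Polynomial.evalRingHom (0 : K)) ∘ xP) = x := by funext i; simp [xP]
  have hy' : (⇑(Polynomial.evalRingHom (0 : K)) ∘ yP) = y := by funext i; simp [yP]
  have hM' : MP.map (Polynomial.evalRingHom (0 : K)) = M := by
    ext i j; simp [MP, Matrix.map_apply]
  rw [hu', hv', hx', hy', hM'] at hg
  have hsc : ∀ (w : n → K) i, (Polynomial.evalRingHom (0 : K)) (Polynomial.C (w i)) = w i := by
    intro w i; simp
  simp only [show ∀ i, (Polynomial.evalRingHom (0 : K)) (uP i) = u i from fun i => by simp [uP],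
    show ∀ i, (Polynomial.evalRingHom (0 : K)) (vP i) = v i from fun i => by simp [vP],
    show ∀ i, (Polynomial.evalRingHom (0 : K)) (xP i) = x i from fun i => by simp [xP],
    show ∀ i, (Polynomial.evalRingHom (0 : K)) (yP i) = y i from fun i => by simp [yP]] at hg
  exact hg

theorem block_det_diagonal_formula {K : Type*} [Field K] {n : Type*} [Fintype n] [DecidableEq n]
    (A B : Matrix n n K) (hA : IsUnit A.det) (u v x y : n → K) :
    (fromBlocks (A * diagonal u) (B * diagonal x) (A * diagonal v) (B * diagonal y)).det
      = A.det ^ 2 * (Matrix.of fun i j => (u i * y j - v i * x j) * (A⁻¹ * B) i j).det := by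
  have hfactor : fromBlocks (A * diagonal u) (B * diagonal x) (A * diagonal v) (B * diagonal y)
      = fromBlocks A 0 0 A *
        fromBlocks (diagonal u) (A⁻¹ * B * diagonal x) (diagonal v) (A⁻¹ * B * diagonal y) := by
    rw [fromBlocks_multiply]
    simp only [Matrix.zero_mul, Matrix.mul_zero, add_zero, zero_add, ← Matrix.mul_assoc]
    rw [Matrix.mul_assoc A A⁻¹ B, Matrix.mul_nonsing_inv_cancel_left _ _ hA]
  rw [hfactor, det_mul, det_fromBlocks_zero₁₂, key_general, sq]
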